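/- Let z ∈ ℂ with Im z ≥ 0, M : A × A → ℕ with M_{j,j} ≥ 1 for all j, and let h ∈ ℍ^A satisfy h_j = -1/(z + Σ_k M_{j,k} h_k) for all j ∈ A. Then |h_j| ≤ 1/√(M_{j,j}) for every j ∈ A. -/

import Mathlib

open Complex

/-- Upper bound for fixed points: if `M` has positive diagonal and
`h_j = -1/(z + Σ_k M_{j,k} h_k)` with `h ∈ ℍ^A`, `Im z ≥ 0`, then
`|h_j| ≤ 1/√(M_{j,j})`. -/
theorem fixed_point_upper_bound {A : Type*} [Fintype A] [Nonempty A]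
    (M : A → A → ℕ) (hMdiag : ∀ j, 1 ≤ M j j) (z : ℂ) (hz : 0 ≤ z.im)
    (h : A → ℂ) (hh : ∀ j, 0 < (h j).im)
    (hfix : ∀ j, h j * (z + ∑ k, (M j k : ℂ) * h k) = -1) :
    ∀ j, ‖h j‖ ≤ 1 / Real.sqrt (M j j) := by
  intro j
  set a := h j with ha
  have ha0 : a ≠ 0 := by
    intro h0
    have := hfix j
    rw [← ha, h0, zero_mul] at this
    exact (by norm_num : (0:ℂ) ≠ -1) this
  have hns : 0 < Complex.normSq a := Complex.normSq_pos.mpr ha0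
  have hfj := hfix j
  rw [← ha] at hfj
  have hw : z + ∑ k, (M j k : ℂ) * h k = -a⁻¹ := by
    field_simp
    linear_combination hfj
  have him : z.im + ∑ k, (M j k : ℝ) * (h k).im = a.im / Complex.normSq a := by
    have := congrArg Complex.im hw
    simpa [Complex.add_im, Complex.inv_im, neg_div, Complex.im_sum, Complex.mul_im] using this
  have hlow : (M j j : ℝ) * a.im ≤ z.im + ∑ k, (M j k : ℝ) * (h k).im := by
    have hsum : (M j j : ℝ) * (h j).im ≤ ∑ k, (M j k : ℝ) * (h k).im := by
      apply Finset.single_le_sum (f := fun k => (M j k : ℝ) * (h k).im)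
      · intro k _
        exact mul_nonneg (Nat.cast_nonneg _) (hh k).le
      · exact Finset.mem_univ j
    linarith
  have key : (M j j : ℝ) * Complex.normSq a ≤ 1 := by
    have h1 : (M j j : ℝ) * a.im ≤ a.im / Complex.normSq a := by rw [← him]; exact hlow
    have h2 : (M j j : ℝ) * a.im * Complex.normSq a ≤ a.im := by
      have := mul_le_mul_of_nonneg_right h1 hns.le
      rwa [div_mul_cancel₀ _ hns.ne'] at this
    have := hh j
    nlinarith [hh j]
  have hM : (0:ℝ) < M j j := by exact_mod_cast hMdiag j
  have habs : ‖a‖ = Real.sqrt (Complex.normSq a) := Complex.norm_def a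
  rw [habs, one_div, ← Real.sqrt_inv]
  apply Real.sqrt_le_sqrt
  have h3 : (M j j:ℝ) * Complex.normSq a ≤ (M j j:ℝ) * (M j j:ℝ)⁻¹ := by
    rw [mul_inv_cancel₀ hM.ne']; exact key
  exact le_of_mul_le_mul_left h3 hM
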